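/- Let n ≥ 1, α ∈ (1,2), ε ∈ (0,1), and let φ̃(x) = x₁^α − ε^α |x|^α on ℝⁿ. Then for every x ∈ ℝⁿ with 0 < x₁ (so that x₁ ≤ |x|), one has the matrix inequality D²φ̃(x) − α ε^α |x|^{α−2} Iₙ ⪰ α |x|^{α−2} · diag(α − 1 − 2ε^α, −2ε^α, …, −2ε^α), i.e., the difference of the left-hand side and the right-hand side is positive semidefinite. -/

import Mathlib

open Real Set

/-- The weight `φ̃(x) = x₁^α - ε^α |x|^α`. -/
noncomputable def phit {n : ℕ} [NeZero n] (α ε : ℝ)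
    (x : EuclideanSpace ℝ (Fin n)) : ℝ :=
  x 0 ^ α - ε ^ α * ‖x‖ ^ α

/-- The Hessian matrix of `f` at `x`: `(i, j) ↦ ∂ᵢ∂ⱼ f (x)`. -/
noncomputable def hess {n : ℕ} (f : EuclideanSpace ℝ (Fin n) → ℝ)
    (x : EuclideanSpace ℝ (Fin n)) : Matrix (Fin n) (Fin n) ℝ :=
  Matrix.of fun i j =>
    fderiv ℝ (fun y => fderiv ℝ f y (EuclideanSpace.single j 1)) x
      (EuclideanSpace.single i 1)

section Helpers

variable {n : ℕ} [NeZero n]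

local notation "E" => EuclideanSpace ℝ (Fin n)

lemma hasFDerivAt_inner_self (y : E) :
    HasFDerivAt (fun z : E => (inner ℝ z z : ℝ)) ((2:ℝ) • (innerSL ℝ y)) y := by
  have h := (hasFDerivAt_id y).inner ℝ (hasFDerivAt_id y)
  refine h.congr_fderiv (Eq.symm ?_)
  ext w
  simp [fderivInnerCLM_apply, real_inner_comm, two_smul]

lemma norm_rpow_hasFDerivAt (y : E) (hy : y ≠ 0) (β : ℝ) :
    HasFDerivAt (fun z : E => ‖z‖ ^ β) ((β * ‖y‖ ^ (β-2)) • (innerSL ℝ y)) y := by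
  have hyn : (0:ℝ) < ‖y‖ := norm_pos_iff.mpr hy
  have hself : (inner ℝ y y : ℝ) = ‖y‖ ^ (2:ℕ) := real_inner_self_eq_norm_sq y
  have h2 : HasDerivAt (fun t : ℝ => t ^ (β/2))
      ((β/2) * (inner ℝ y y : ℝ) ^ (β/2 - 1)) (inner ℝ y y : ℝ) :=
    Real.hasDerivAt_rpow_const (Or.inl (by rw [hself]; positivity))
  have h3 := h2.comp_hasFDerivAt (f := fun z : E => (inner ℝ z z : ℝ)) y (hasFDerivAt_inner_self y)
  have hfun : (fun z : E => (inner ℝ z z : ℝ) ^ (β/2)) = fun z : E => ‖z‖ ^ β := by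
    funext z
    rw [real_inner_self_eq_norm_sq, ← Real.rpow_natCast ‖z‖ 2,
      ← Real.rpow_mul (norm_nonneg z)]
    rw [show ((2:ℕ):ℝ) * (β/2) = β by push_cast; ring]
  rw [Function.comp_def, hfun] at h3
  refine h3.congr_fderiv (Eq.symm ?_)
  rw [smul_smul, hself, ← Real.rpow_natCast ‖y‖ 2, ← Real.rpow_mul (norm_nonneg y),
    show ((2:ℕ):ℝ) * (β/2 - 1) = β - 2 by push_cast; ring]
  ring

lemma proj_rpow_hasFDerivAt (y : E) (hy : y 0 ≠ 0) (β : ℝ) :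
    HasFDerivAt (fun z : E => (z 0) ^ β)
      ((β * (y 0) ^ (β-1)) • (EuclideanSpace.proj (0 : Fin n) : E →L[ℝ] ℝ)) y := by
  have h2 : HasDerivAt (fun t : ℝ => t ^ β) (β * (y 0) ^ (β - 1)) (y 0) :=
    Real.hasDerivAt_rpow_const (Or.inl hy)
  have := h2.comp_hasFDerivAt (f := fun z : E => z 0) y
    ((EuclideanSpace.proj (0 : Fin n) : E →L[ℝ] ℝ)).hasFDerivAt
  exact this

lemma phit_hasFDerivAt (α ε : ℝ) (y : E) (hy : 0 < y 0) :
    HasFDerivAt (phit α ε)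
      ((α * (y 0) ^ (α-1)) • (EuclideanSpace.proj (0 : Fin n) : E →L[ℝ] ℝ)
        - (ε ^ α * (α * ‖y‖ ^ (α-2))) • (innerSL ℝ y)) y := by
  have hy0 : y ≠ 0 := by
    intro h
    rw [h] at hy
    simp at hy
  have h1 := proj_rpow_hasFDerivAt y (ne_of_gt hy) α
  have h2 := (norm_rpow_hasFDerivAt y hy0 α).const_mul (ε ^ α)
  have h := h1.sub h2
  have : HasFDerivAt (fun z : E => (z 0) ^ α - ε ^ α * ‖z‖ ^ α)
      ((α * (y 0) ^ (α-1)) • (EuclideanSpace.proj (0 : Fin n) : E →L[ℝ] ℝ)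
        - (ε ^ α * (α * ‖y‖ ^ (α-2))) • (innerSL ℝ y)) y := by
    refine h.congr_fderiv (Eq.symm ?_)
    rw [smul_smul]
  exact this

lemma hess_phit_apply (α ε : ℝ) (hα : 1 < α) (x : E) (hx : 0 < x 0) (i j : Fin n) :
    hess (phit α ε) x i j
      = α * (α-1) * (x 0) ^ (α-2) * (if 0 = i then 1 else 0) * (if 0 = j then 1 else 0)
        - ε ^ α * α * ((α-2) * ‖x‖ ^ (α-4) * x i * x j
            + ‖x‖ ^ (α-2) * (if j = i then 1 else 0)) := by
  have hx0 : x ≠ 0 := by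
    intro h
    rw [h] at hx
    simp at hx
  have hc : Continuous (fun y : E => y 0) :=
    (EuclideanSpace.proj (0 : Fin n) : E →L[ℝ] ℝ).continuous
  have hopen : IsOpen {y : E | 0 < y 0} := isOpen_lt continuous_const hc
  have hmem : {y : E | 0 < y 0} ∈ nhds x := hopen.mem_nhds hx
  have heq : (fun y => fderiv ℝ (phit α ε) y (EuclideanSpace.single j 1))
      =ᶠ[nhds x] (fun y : E => α * (y 0) ^ (α-1) * ((EuclideanSpace.single j (1:ℝ)) 0)
        - (ε ^ α * α) * (‖y‖ ^ (α-2) * y j)) := by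
    filter_upwards [hmem] with y hy
    rw [(phit_hasFDerivAt α ε y hy).fderiv]
    simp [EuclideanSpace.inner_single_right]
    ring
  have h2 : hess (phit α ε) x i j
      = fderiv ℝ (fun y : E => α * (y 0) ^ (α-1) * ((EuclideanSpace.single j (1:ℝ)) 0)
        - (ε ^ α * α) * (‖y‖ ^ (α-2) * y j)) x (EuclideanSpace.single i 1) := by
    rw [hess]
    simp only [Matrix.of_apply]
    rw [heq.fderiv_eq]
  have t1 : HasFDerivAt (fun y : E => (y 0) ^ (α-1))
      (((α-1) * (x 0) ^ (α-2)) • (EuclideanSpace.proj (0 : Fin n) : E →L[ℝ] ℝ)) x := by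
    have := proj_rpow_hasFDerivAt x (ne_of_gt hx) (α-1)
    convert this using 3
    ring
  have t2a : HasFDerivAt (fun y : E => ‖y‖ ^ (α-2))
      (((α-2) * ‖x‖ ^ (α-4)) • (innerSL ℝ x)) x := by
    have := norm_rpow_hasFDerivAt x hx0 (α-2)
    convert this using 3
    ring
  have t2b : HasFDerivAt (fun y : E => y j)
      (EuclideanSpace.proj j : E →L[ℝ] ℝ) x :=
    (EuclideanSpace.proj j : E →L[ℝ] ℝ).hasFDerivAt
  have tG := ((t1.const_mul α).mul_const ((EuclideanSpace.single j (1:ℝ)) 0)).sub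
    ((t2a.mul t2b).const_mul (ε ^ α * α))
  rw [h2, (show HasFDerivAt (fun y : E => α * (y 0) ^ (α-1) * ((EuclideanSpace.single j (1:ℝ)) 0)
          - (ε ^ α * α) * (‖y‖ ^ (α-2) * y j)) _ x from tG).fderiv]
  simp only [ContinuousLinearMap.sub_apply, ContinuousLinearMap.smul_apply,
    ContinuousLinearMap.add_apply, smul_eq_mul, PiLp.proj_apply,
    innerSL_apply_apply, EuclideanSpace.inner_single_right, starRingEnd_apply, star_trivial,
    EuclideanSpace.single_apply]
  split_ifs <;> ring

lemma posSemidef_outer (c : ℝ) (hc : 0 ≤ c) (u : Fin n → ℝ) :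
    (Matrix.of fun i j => c * (u i * u j)).PosSemidef := by
  rw [Matrix.posSemidef_iff_dotProduct_mulVec]
  constructor
  · ext i j
    simp only [Matrix.conjTranspose_apply, Matrix.of_apply, star_trivial]
    ring
  · intro v
    have key : dotProduct (star v : Fin n → ℝ)
        (Matrix.mulVec ((Matrix.of fun i j => c * (u i * u j)) : Matrix (Fin n) (Fin n) ℝ) v)
        = c * ((∑ j, u j * v j) * (∑ j, u j * v j)) := by
      simp only [dotProduct, Matrix.mulVec, Pi.star_apply, star_trivial,
        Matrix.of_apply]
      rw [Finset.sum_mul_sum, Finset.mul_sum]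
      refine Finset.sum_congr rfl fun i _ => ?_
      rw [Finset.mul_sum, Finset.mul_sum]
      refine Finset.sum_congr rfl fun j _ => ?_
      ring
    rw [key]
    exact mul_nonneg hc (mul_self_nonneg _)

lemma posSemidef_two_outer (c d : ℝ) (hc : 0 ≤ c) (hd : 0 ≤ d) (u v : Fin n → ℝ) :
    (Matrix.of fun i j => c * (u i * u j) + d * (v i * v j)).PosSemidef := by
  have h : (Matrix.of fun i j => c * (u i * u j) + d * (v i * v j))
      = (Matrix.of fun i j => c * (u i * u j)) + (Matrix.of fun i j => d * (v i * v j)) := rfl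
  rw [h]
  exact (posSemidef_outer c hc u).add (posSemidef_outer d hd v)

theorem hessian_lower_bound_aux (hn : 1 ≤ n) (α ε : ℝ)
    (hα : α ∈ Set.Ioo (1 : ℝ) 2) (hε : ε ∈ Set.Ioo (0 : ℝ) 1)
    (x : EuclideanSpace ℝ (Fin n)) (hx : 0 < x 0) :
    (hess (phit α ε) x
      - (α * ε ^ α * ‖x‖ ^ (α - 2)) • (1 : Matrix (Fin n) (Fin n) ℝ)
      - (α * ‖x‖ ^ (α - 2)) • Matrix.diagonal
          (fun i : Fin n => if i = 0 then α - 1 - 2 * ε ^ α else -(2 * ε ^ α))).PosSemidef := by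
  obtain ⟨hα1, hα2⟩ := hα
  obtain ⟨hε0, hε1⟩ := hε
  have hx0 : x ≠ 0 := by
    intro h
    rw [h] at hx
    simp at hx
  have hxn : (0:ℝ) < ‖x‖ := norm_pos_iff.mpr hx0
  have hx0le : x 0 ≤ ‖x‖ := by
    calc x 0 ≤ |x 0| := le_abs_self _
    _ = ‖(x 0 : ℝ)‖ := (Real.norm_eq_abs _).symm
    _ ≤ ‖x‖ := by
        have := abs_real_inner_le_norm x (EuclideanSpace.single 0 (1:ℝ))
        rw [EuclideanSpace.inner_single_right, EuclideanSpace.norm_single] at this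
        simpa using this
  have hK1nn : 0 ≤ α * (α - 1) * ((x 0) ^ (α-2) - ‖x‖ ^ (α-2)) := by
    have : ‖x‖ ^ (α-2) ≤ (x 0) ^ (α-2) :=
      Real.rpow_le_rpow_of_nonpos hx hx0le (by linarith)
    have h1 : 0 ≤ (x 0) ^ (α-2) - ‖x‖ ^ (α-2) := by linarith
    have h2 : (0:ℝ) ≤ α * (α - 1) := by nlinarith
    exact mul_nonneg h2 h1
  have hK2nn : 0 ≤ ε ^ α * α * ((2 - α) * ‖x‖ ^ (α-4)) := by
    have h1 : (0:ℝ) < ε ^ α := Real.rpow_pos_of_pos hε0 α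
    have h2 : (0:ℝ) < ‖x‖ ^ (α-4) := Real.rpow_pos_of_pos hxn _
    exact mul_nonneg (mul_nonneg h1.le (by linarith)) (mul_nonneg (by linarith) h2.le)
  have hM : (hess (phit α ε) x
      - (α * ε ^ α * ‖x‖ ^ (α - 2)) • (1 : Matrix (Fin n) (Fin n) ℝ)
      - (α * ‖x‖ ^ (α - 2)) • Matrix.diagonal
          (fun i : Fin n => if i = 0 then α - 1 - 2 * ε ^ α else -(2 * ε ^ α)))
      = Matrix.of fun i j =>
          (α * (α - 1) * ((x 0) ^ (α-2) - ‖x‖ ^ (α-2)))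
            * ((if 0 = i then (1:ℝ) else 0) * (if 0 = j then 1 else 0))
          + (ε ^ α * α * ((2 - α) * ‖x‖ ^ (α-4))) * (x i * x j) := by
    ext i j
    simp only [Matrix.sub_apply, Matrix.smul_apply, Matrix.of_apply, smul_eq_mul,
      Matrix.one_apply, Matrix.diagonal_apply, hess_phit_apply α ε hα1 x hx i j]
    split_ifs <;> (try ring) <;> (exfalso; subst_vars; simp_all only [not_true_eq_false])
  rw [hM]
  exact posSemidef_two_outer _ _ hK1nn hK2nn _ _

end Helpers

/-- For `φ̃(x) = x₁^α - ε^α |x|^α` and `x₁ > 0`, one has the matrix inequality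
`D²φ̃(x) - α ε^α |x|^{α-2} Iₙ ⪰ α |x|^{α-2} diag(α - 1 - 2ε^α, -2ε^α, …, -2ε^α)`. -/
theorem hessian_lower_bound (n : ℕ) [NeZero n] (hn : 1 ≤ n) (α ε : ℝ)
    (hα : α ∈ Set.Ioo (1 : ℝ) 2) (hε : ε ∈ Set.Ioo (0 : ℝ) 1)
    (x : EuclideanSpace ℝ (Fin n)) (hx : 0 < x 0) :
    (hess (phit α ε) x
      - (α * ε ^ α * ‖x‖ ^ (α - 2)) • (1 : Matrix (Fin n) (Fin n) ℝ)
      - (α * ‖x‖ ^ (α - 2)) • Matrix.diagonal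
          (fun i : Fin n => if i = 0 then α - 1 - 2 * ε ^ α else -(2 * ε ^ α))).PosSemidef := by
  exact hessian_lower_bound_aux hn α ε hα hε x hx
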